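/- Let S be a polynomial ring over an infinite field and I ⊆ S a non-principal graded ideal generated in degree 2 with S/I Gorenstein. Then I is extremal Gorenstein (reg S/I = 2) if and only if the h-vector of S/I has the form (1, q, 1, 0, ..., 0) with q > 1. -/

import Mathlib

open MvPolynomial

/-- The degree-`n` graded piece of `S/J`, where `S = K[x_1,…,x_N]`: the image in the
quotient of the space of homogeneous polynomials of degree `n`. -/
noncomputable def gradedPiece (K : Type*) [Field K] {N : ℕ}
    (J : Ideal (MvPolynomial (Fin N) K)) (n : ℕ) :
    Submodule K (MvPolynomial (Fin N) K ⧸ J) :=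
  Submodule.map (Ideal.Quotient.mkₐ K J).toLinearMap (homogeneousSubmodule (Fin N) K n)

/-- `L` is a regular sequence on `S/I`: each `L k` is a nonzerodivisor modulo `I`
together with the previous elements of `L`, and the quotient by all of them is
nonzero. -/
def IsRegularSeq (K : Type*) [Field K] {N : ℕ} (I : Ideal (MvPolynomial (Fin N) K))
    (L : List (MvPolynomial (Fin N) K)) : Prop :=
  (∀ k : ℕ, ∀ hk : k < L.length, ∀ f : MvPolynomial (Fin N) K,
      L.get ⟨k, hk⟩ * f ∈ I ⊔ Ideal.span {g | g ∈ L.take k} →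
        f ∈ I ⊔ Ideal.span {g | g ∈ L.take k}) ∧
  I ⊔ Ideal.span {g | g ∈ L} ≠ ⊤

/-- The Hilbert series of `S/J` as a formal power series over `ℤ`. -/
noncomputable def hilbertSeries (K : Type*) [Field K] {N : ℕ}
    (J : Ideal (MvPolynomial (Fin N) K)) : PowerSeries ℤ :=
  PowerSeries.mk fun n => (Module.finrank K (gradedPiece K J n) : ℤ)

open Module

section Helpers
variable {K : Type*} [Field K] {N : ℕ}

local notation "S" => MvPolynomial (Fin N) K
local notation "HS" => homogeneousSubmodule (Fin N) K

-- component of product with homogeneous element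
lemma comp_mul_hom {g : S} {m : ℕ} (hg : g.IsHomogeneous m) (s : S) (n : ℕ) :
    homogeneousComponent n (s * g) =
      if m ≤ n then homogeneousComponent (n - m) s * g else 0 := by
  conv_lhs => rw [← sum_homogeneousComponent s]
  rw [Finset.sum_mul, map_sum]
  have key : ∀ i, homogeneousComponent n (homogeneousComponent i s * g) =
      if i + m = n then homogeneousComponent i s * g else 0 := by
    intro i
    have : (homogeneousComponent i s * g).IsHomogeneous (i + m) :=
      (homogeneousComponent_isHomogeneous i s).mul hg
    rw [homogeneousComponent_of_mem this]
    simp [eq_comm]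
  simp_rw [key]
  by_cases h : m ≤ n
  · have hc : ∀ x : ℕ, (x + m = n) ↔ (x = n - m) := fun x => by omega
    simp_rw [hc]
    rw [Finset.sum_ite_eq' (Finset.range (s.totalDegree + 1)) (n - m)
      (fun x => homogeneousComponent x s * g)]
    simp only [h, if_true, Finset.mem_range]
    by_cases hmem : n - m < s.totalDegree + 1
    · simp [hmem]
    · rw [if_neg hmem, homogeneousComponent_eq_zero _ _ (by omega), zero_mul]
  · have hc : ∀ x : ℕ, ¬ (x + m = n) := fun x => by omega
    simp [hc, h]

/-- every homogeneous component of an element of an ideal spanned by homogeneous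
elements lies in the ideal -/
lemma span_hom_comp_mem {T : Set S} (hT : ∀ g ∈ T, ∃ m, g.IsHomogeneous m)
    {p : S} (hp : p ∈ Ideal.span T) (n : ℕ) : homogeneousComponent n p ∈ Ideal.span T := by
  induction hp using Submodule.span_induction generalizing n with
  | mem g hg =>
      obtain ⟨m, hm⟩ := hT g hg
      rw [homogeneousComponent_of_mem hm]
      split
      · exact Ideal.subset_span hg
      · exact zero_mem _
  | zero => simp only [map_zero]; exact zero_mem _
  | add x y _ _ hx hy => rw [map_add]; exact add_mem (hx n) (hy n)
  | smul s q hq hcomp =>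
      rw [smul_eq_mul]
      have hq' : s * q = ∑ j ∈ Finset.range (q.totalDegree + 1),
          s * homogeneousComponent j q := by
        conv_lhs => rw [← sum_homogeneousComponent q]
        rw [Finset.mul_sum]
      rw [hq', map_sum]
      refine Submodule.sum_mem _ fun j _ => ?_
      rw [comp_mul_hom (homogeneousComponent_isHomogeneous j q) s n]
      split
      · exact Ideal.mul_mem_left _ _ (hcomp j)
      · exact zero_mem _

instance hsfd (n : ℕ) : FiniteDimensional K (HS n) := by
  have hle : HS n ≤ restrictTotalDegree (Fin N) K n := by
    intro p hp
    rw [mem_restrictTotalDegree]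
    exact IsHomogeneous.totalDegree_le hp
  exact Submodule.finiteDimensional_of_le hle

instance gpfd (J : Ideal (MvPolynomial (Fin N) K)) (n : ℕ) :
    FiniteDimensional K (gradedPiece K J n) := by
  unfold gradedPiece
  infer_instance

lemma finrank_map_add_inf_ker {Q Q' : Type*} [AddCommGroup Q] [Module K Q]
    [AddCommGroup Q'] [Module K Q'] (f : Q →ₗ[K] Q') (W : Submodule K Q)
    [FiniteDimensional K W] :
    finrank K (Submodule.map f W) + finrank K (W ⊓ LinearMap.ker f : Submodule K Q)
      = finrank K W := by
  have h := LinearMap.finrank_range_add_finrank_ker (f.domRestrict W)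
  rw [LinearMap.range_domRestrict] at h
  rw [← h]
  congr 1
  rw [LinearMap.ker_domRestrict]
  have : Submodule.comap W.subtype (LinearMap.ker f)
      = Submodule.comap W.subtype (W ⊓ LinearMap.ker f) := by
    ext x; simp [x.2]
  rw [this]
  exact (Submodule.comapSubtypeEquivOfLe inf_le_left).finrank_eq.symm

lemma mem_gradedPiece {J : Ideal (MvPolynomial (Fin N) K)} {n : ℕ}
    {v : MvPolynomial (Fin N) K ⧸ J} :
    v ∈ gradedPiece K J n ↔ ∃ p ∈ HS n, Ideal.Quotient.mk J p = v := by
  simp only [gradedPiece, Submodule.mem_map]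
  rfl

/-- the factor map as a linear map -/
noncomputable def fmap {J J' : Ideal (MvPolynomial (Fin N) K)} (h : J ≤ J') :
    (MvPolynomial (Fin N) K ⧸ J) →ₗ[K] (MvPolynomial (Fin N) K ⧸ J') :=
  (Ideal.Quotient.liftₐ J (Ideal.Quotient.mkₐ K J')
    (fun a ha => Ideal.Quotient.eq_zero_iff_mem.2 (h ha))).toLinearMap

@[simp] lemma fmap_mk {J J' : Ideal (MvPolynomial (Fin N) K)} (h : J ≤ J') (x : S) :
    fmap h (Ideal.Quotient.mk J x) = Ideal.Quotient.mk J' x := rfl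

lemma fmap_map_gp {J J' : Ideal (MvPolynomial (Fin N) K)} (h : J ≤ J') (n : ℕ) :
    Submodule.map (fmap h) (gradedPiece K J n) = gradedPiece K J' n := by
  unfold gradedPiece
  rw [← Submodule.map_comp]
  rfl


lemma gp_zero_finrank {J : Ideal (MvPolynomial (Fin N) K)} (hJ : J ≠ ⊤) :
    finrank K (gradedPiece K J 0) = 1 := by
  have h0 : HS 0 = Submodule.span K {(1 : S)} := by
    apply le_antisymm
    · intro p hp
      have h1 : homogeneousComponent 0 p = p := by
        rw [homogeneousComponent_of_mem hp, if_pos rfl]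
      have h2 : p = C (coeff 0 p) := by
        rw [← h1, homogeneousComponent_zero]
        simp [h1]
      rw [Submodule.mem_span_singleton]
      exact ⟨coeff 0 p, by rw [h2]; simp [smul_eq_C_mul]⟩
    · rw [Submodule.span_singleton_le_iff_mem]
      exact isHomogeneous_one _ _
  have : gradedPiece K J 0 = Submodule.span K {(1 : MvPolynomial (Fin N) K ⧸ J)} := by
    unfold gradedPiece
    rw [h0, Submodule.map_span]
    norm_num
  rw [this]
  apply finrank_span_singleton
  intro h
  exact hJ ((Ideal.eq_top_iff_one J).2 (Ideal.Quotient.eq_zero_iff_mem.1 (by rw [map_one]; exact h)))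

lemma gp_step {J : Ideal (MvPolynomial (Fin N) K)}
    (hJhom : ∀ p ∈ J, ∀ n : ℕ, homogeneousComponent n p ∈ J)
    {l : S} (hl : l.IsHomogeneous 1)
    (hregJ : ∀ f : S, l * f ∈ J → f ∈ J) (n : ℕ) :
    finrank K (gradedPiece K (J ⊔ Ideal.span {l}) (n + 1))
        + finrank K (gradedPiece K J n)
      = finrank K (gradedPiece K J (n + 1)) := by
  set J' : Ideal (MvPolynomial (Fin N) K) := J ⊔ Ideal.span {l} with hJ'
  have hle : J ≤ J' := le_sup_left
  have hlJ' : l ∈ J' := (le_sup_right : Ideal.span {l} ≤ J') (Ideal.subset_span rfl)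
  set φ := fmap (K := K) hle with hφ
  set μ : (MvPolynomial (Fin N) K ⧸ J) →ₗ[K] (MvPolynomial (Fin N) K ⧸ J) :=
    LinearMap.mulLeft K (Ideal.Quotient.mk J l) with hμ
  have hμmk : ∀ y : S, μ (Ideal.Quotient.mk J y) = Ideal.Quotient.mk J (l * y) := by
    intro y; simp [hμ, LinearMap.mulLeft_apply, ← map_mul]
  -- rank-nullity for φ on gradedPiece (n+1)
  have h1 := finrank_map_add_inf_ker φ (gradedPiece K J (n + 1))
  rw [fmap_map_gp hle (n + 1)] at h1
  -- identify the kernel piece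
  have hker : gradedPiece K J (n + 1) ⊓ LinearMap.ker φ
      = Submodule.map μ (gradedPiece K J n) := by
    apply le_antisymm
    · rintro v ⟨hv, hkv⟩
      obtain ⟨x, hx, rfl⟩ := mem_gradedPiece.1 hv
      have hxJ' : x ∈ J' := by
        have : φ (Ideal.Quotient.mk J x) = 0 := hkv
        rw [fmap_mk] at this
        exact Ideal.Quotient.eq_zero_iff_mem.1 this
      rw [Submodule.mem_sup] at hxJ'
      obtain ⟨j, hj, m, hm, hjm⟩ := hxJ'
      obtain ⟨s, hs⟩ := Ideal.mem_span_singleton'.1 hm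
      have hxcomp : homogeneousComponent (n + 1) x = x := by
        rw [homogeneousComponent_of_mem hx, if_pos rfl]
      have hxeq : x = homogeneousComponent (n + 1) j
          + homogeneousComponent n s * l := by
        calc x = homogeneousComponent (n + 1) x := hxcomp.symm
          _ = homogeneousComponent (n + 1) j + homogeneousComponent (n + 1) m := by
              rw [← hjm, map_add]
          _ = homogeneousComponent (n + 1) j + homogeneousComponent n s * l := by
              rw [← hs, comp_mul_hom hl s (n + 1), if_pos (by omega : 1 ≤ n + 1)]
              simp
      refine Submodule.mem_map.2 ⟨Ideal.Quotient.mk J (homogeneousComponent n s),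
        mem_gradedPiece.2 ⟨homogeneousComponent n s, homogeneousComponent_mem n s, rfl⟩, ?_⟩
      rw [hμmk]
      rw [hxeq, map_add, Ideal.Quotient.eq_zero_iff_mem.2 (hJhom j hj (n + 1)), zero_add]
      rw [mul_comm]
    · rintro v hv
      obtain ⟨w, hw, rfl⟩ := Submodule.mem_map.1 hv
      obtain ⟨y, hy, rfl⟩ := mem_gradedPiece.1 hw
      rw [hμmk]
      constructor
      · exact mem_gradedPiece.2 ⟨l * y, by simpa [add_comm] using hl.mul hy, rfl⟩
      · have : φ (Ideal.Quotient.mk J (l * y)) = 0 := by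
          rw [fmap_mk]
          exact Ideal.Quotient.eq_zero_iff_mem.2 (Ideal.mul_mem_right y J' hlJ')
        exact this
  rw [hker] at h1
  -- μ is injective on gradedPiece n
  have h2 := finrank_map_add_inf_ker μ (gradedPiece K J n)
  have hinj : gradedPiece K J n ⊓ LinearMap.ker μ = ⊥ := by
    rw [Submodule.eq_bot_iff]
    rintro v ⟨hv, hkv⟩
    obtain ⟨y, hy, rfl⟩ := mem_gradedPiece.1 hv
    have : Ideal.Quotient.mk J (l * y) = 0 := by rw [← hμmk]; exact hkv
    exact Ideal.Quotient.eq_zero_iff_mem.2 (hregJ y (Ideal.Quotient.eq_zero_iff_mem.1 this))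
  rw [hinj, finrank_bot, add_zero] at h2
  omega

/-- degree-1 finsupps are singles -/
lemma deg_one_eq_single {d : Fin N →₀ ℕ} (h : d.degree = 1) :
    ∃ i, d = Finsupp.single i 1 := by
  have hne : d.support.Nonempty := by
    rw [Finsupp.support_nonempty_iff]
    intro h0
    rw [h0] at h
    simp at h
  obtain ⟨i, hi⟩ := hne
  have hdi : 1 ≤ d i := Nat.one_le_iff_ne_zero.2 (Finsupp.mem_support_iff.1 hi)
  have hsum : d.degree = d i + ∑ j ∈ d.support.erase i, d j := by
    rw [Finsupp.degree_apply, ← Finset.add_sum_erase _ _ hi]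
  have herase : ∀ j ∈ d.support.erase i, d j = 0 := by
    intro j hj
    by_contra hdj
    have h1j : 1 ≤ d j := Nat.one_le_iff_ne_zero.2 hdj
    have : 1 ≤ ∑ j ∈ d.support.erase i, d j :=
      le_trans h1j (Finset.single_le_sum (f := fun j => d j) (fun _ _ => Nat.zero_le _) hj)
    omega
  have hsupp : d.support = {i} := by
    apply Finset.eq_singleton_iff_unique_mem.2
    refine ⟨hi, fun j hj => ?_⟩
    by_contra hji
    exact (Finsupp.mem_support_iff.1 hj) (herase j (Finset.mem_erase.2 ⟨hji, hj⟩))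
  have hdi1 : d i = 1 := by
    rw [hsum, Finset.sum_eq_zero herase] at h
    omega
  obtain ⟨_, hd⟩ := Finsupp.support_eq_singleton.1 hsupp
  exact ⟨i, by rw [hd, hdi1]⟩

lemma deg_two_eq_pair {d : Fin N →₀ ℕ} (h : d.degree = 2) :
    ∃ i j, d = Finsupp.single i 1 + Finsupp.single j 1 := by
  have hne : d.support.Nonempty := by
    rw [Finsupp.support_nonempty_iff]
    intro h0
    rw [h0] at h
    simp at h
  obtain ⟨i, hi⟩ := hne
  have hdi : 1 ≤ d i := Nat.one_le_iff_ne_zero.2 (Finsupp.mem_support_iff.1 hi)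
  have hle : Finsupp.single i 1 ≤ d := Finsupp.single_le_iff.2 hdi
  set e := d - Finsupp.single i 1 with he
  have hde : d = e + Finsupp.single i 1 := (tsub_add_cancel_of_le hle).symm
  have hdeg : e.degree = 1 := by
    have hadd : d.degree = e.degree + (Finsupp.single i (1:ℕ)).degree := by
      rw [hde]
      simp only [Finsupp.degree_eq_weight_one]
      exact map_add _ _ _
    have hs : (Finsupp.single i (1:ℕ)).degree = 1 := by
      rw [Finsupp.degree_apply, Finsupp.support_single_ne_zero i one_ne_zero]
      simp
    omega
  obtain ⟨j, hj⟩ := deg_one_eq_single hdeg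
  exact ⟨j, i, by rw [hde, hj]⟩

/-- homogeneous polys lie in the span of monomials of the right degree -/
lemma hom_mem_span_monomials {n : ℕ} {p : S} (hp : p ∈ HS n) :
    p ∈ Submodule.span K ((fun d => (monomial d (1:K) : S)) '' {d | d.degree = n}) := by
  nth_rewrite 1 [p.as_sum]
  refine Submodule.sum_mem _ fun d hd => ?_
  have hdeg : d.degree = n := by
    rw [Finsupp.degree_eq_weight_one]
    exact hp (MvPolynomial.mem_support_iff.1 hd)
  have : (monomial d (coeff d p) : S) = coeff d p • monomial d 1 := by
    rw [MvPolynomial.smul_monomial, smul_eq_mul, mul_one]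
  rw [this]
  exact Submodule.smul_mem _ _ (Submodule.subset_span ⟨d, hdeg, rfl⟩)

lemma finrank_HS_one : finrank K (HS 1) = N := by
  have hX : LinearIndependent K (fun i : Fin N => (X i : S)) := by
    have h := (basisMonomials (Fin N) K).linearIndependent
    have h2 := h.comp (fun i : Fin N => Finsupp.single i (1:ℕ))
      (Finsupp.single_left_injective one_ne_zero)
    have hfun : (fun i : Fin N => (X i : S))
        = (⇑(basisMonomials (Fin N) K) ∘ fun i : Fin N => Finsupp.single i (1:ℕ)) := by
      funext i
      rw [Function.comp_apply, coe_basisMonomials]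
      rfl
    rw [hfun]
    exact h2
  have hspan : HS 1 = Submodule.span K (Set.range fun i : Fin N => (X i : S)) := by
    apply le_antisymm
    · intro p hp
      refine Submodule.span_le.2 ?_ (hom_mem_span_monomials hp)
      rintro _ ⟨d, hd, rfl⟩
      obtain ⟨i, rfl⟩ := deg_one_eq_single hd
      exact Submodule.subset_span ⟨i, rfl⟩
    · rw [Submodule.span_le]
      rintro _ ⟨i, rfl⟩
      exact isHomogeneous_X _ _
  rw [hspan, finrank_span_eq_card hX, Fintype.card_fin]

lemma finrank_HS_two_le : finrank K (HS 2) ≤ (N + 1).choose 2 := by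
  classical
  set m2 : Sym2 (Fin N) → S := Sym2.lift ⟨fun i j => X i * X j, fun i j => mul_comm _ _⟩
  have hspan : HS 2 ≤ Submodule.span K (Set.range m2) := by
    intro p hp
    refine Submodule.span_le.2 ?_ (hom_mem_span_monomials hp)
    rintro _ ⟨d, hd, rfl⟩
    obtain ⟨i, j, rfl⟩ := deg_two_eq_pair hd
    refine Submodule.subset_span ⟨s(i, j), ?_⟩
    simp only [m2, Sym2.lift_mk]
    rw [X, X, monomial_mul, one_mul]
  haveI : FiniteDimensional K (Submodule.span K (Set.range m2)) :=
    FiniteDimensional.span_of_finite K (Set.finite_range m2)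
  refine le_trans (Submodule.finrank_mono hspan) (le_trans (finrank_span_le_card _) ?_)
  rw [Set.toFinset_range]
  refine le_trans (Finset.card_image_le) ?_
  simp [Sym2.card]

lemma ker_mk_linear (J : Ideal (MvPolynomial (Fin N) K)) :
    LinearMap.ker (Ideal.Quotient.mkₐ K J).toLinearMap = Submodule.restrictScalars K J := by
  ext x
  simp only [LinearMap.mem_ker, AlgHom.toLinearMap_apply, Ideal.Quotient.mkₐ_eq_mk,
    Submodule.restrictScalars_mem]
  exact Ideal.Quotient.eq_zero_iff_mem

lemma finrank_gp_add (J : Ideal (MvPolynomial (Fin N) K)) (n : ℕ) :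
    finrank K (gradedPiece K J n)
        + finrank K (HS n ⊓ Submodule.restrictScalars K J : Submodule K S)
      = finrank K (HS n) := by
  have h := finrank_map_add_inf_ker (Ideal.Quotient.mkₐ K J).toLinearMap (HS n)
  rw [ker_mk_linear] at h
  exact h

/-- ideals generated in degree 2 have no components in degree < 2 -/
lemma span_low_comp {T : Set (MvPolynomial (Fin N) K)} (hT : ∀ g ∈ T, g.IsHomogeneous 2)
    {p : S} (hp : p ∈ Ideal.span T) :
    homogeneousComponent 0 p = 0 ∧ homogeneousComponent 1 p = 0 := by
  induction hp using Submodule.span_induction with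
  | mem g hg =>
      have h2 : g ∈ HS 2 := hT g hg
      constructor <;> rw [homogeneousComponent_of_mem h2] <;> simp
  | zero => simp
  | add x y _ _ hx hy => rw [map_add, map_add, hx.1, hy.1, hx.2, hy.2]; simp
  | smul s q hq hcomp =>
      rw [smul_eq_mul]
      have hq' : ∀ m : ℕ, m < 2 → homogeneousComponent m (s * q) = 0 := by
        intro m hm
        have hqq : s * q = ∑ j ∈ Finset.range (q.totalDegree + 1),
            s * homogeneousComponent j q := by
          conv_lhs => rw [← sum_homogeneousComponent q]
          rw [Finset.mul_sum]
        rw [hqq, map_sum]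
        refine Finset.sum_eq_zero fun j _ => ?_
        rw [comp_mul_hom (homogeneousComponent_isHomogeneous j q) s m]
        split
        · rename_i hjm
          have hj2 : j < 2 := by omega
          have : homogeneousComponent j q = 0 := by
            interval_cases j
            · exact hcomp.1
            · exact hcomp.2
          rw [this, mul_zero]
        · rfl
      exact ⟨hq' 0 (by omega), hq' 1 (by omega)⟩

end Helpers

section Stage

variable {K : Type*} [Field K] {N : ℕ}
local notation "S" => MvPolynomial (Fin N) K
local notation "HS" => homogeneousSubmodule (Fin N) K

variable (I : Ideal (MvPolynomial (Fin N) K)) (L : List (MvPolynomial (Fin N) K))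

/-- partial quotient ideals -/
noncomputable def Jk (k : ℕ) : Ideal (MvPolynomial (Fin N) K) := I ⊔ Ideal.span {g | g ∈ L.take k}

variable {I L}
variable {G : Set (MvPolynomial (Fin N) K)} (hG : ∀ g ∈ G, g.IsHomogeneous 2)
  (hIG : I = Ideal.span G) (hL1 : ∀ f ∈ L, f.IsHomogeneous 1)
  (hreg : IsRegularSeq K I L)

lemma Jk_zero : Jk I L 0 = I := by
  have h : {g : MvPolynomial (Fin N) K | g ∈ L.take 0} = ∅ := by
    ext g; simp
  rw [Jk, h, Ideal.span_empty, sup_bot_eq]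

include hIG in
lemma Jk_span (k : ℕ) : Jk I L k = Ideal.span (G ∪ {g | g ∈ L.take k}) := by
  rw [Jk, Ideal.span_union, hIG]

include hG hIG hL1 in
lemma Jk_hom (k : ℕ) {p : MvPolynomial (Fin N) K} (hp : p ∈ Jk I L k) (n : ℕ) :
    homogeneousComponent n p ∈ Jk I L k := by
  rw [Jk_span hIG] at hp ⊢
  refine span_hom_comp_mem ?_ hp n
  rintro g (hg | hg)
  · exact ⟨2, hG g hg⟩
  · exact ⟨1, hL1 g (List.mem_of_mem_take hg)⟩

include hreg in
lemma Jk_ne_top (k : ℕ) : Jk I L k ≠ ⊤ := by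
  intro htop
  apply hreg.2
  rw [eq_top_iff, ← htop, Jk]
  exact sup_le_sup_left (Ideal.span_mono (fun g hg => List.mem_of_mem_take hg)) I

lemma Jk_succ {k : ℕ} (hk : k < L.length) :
    Jk I L (k + 1) = Jk I L k ⊔ Ideal.span {L.get ⟨k, hk⟩} := by
  rw [Jk, Jk, sup_assoc, ← Ideal.span_union]
  congr 2
  ext g
  simp only [List.take_succ, List.mem_append, Set.mem_setOf_eq, Set.mem_union,
    Set.mem_singleton_iff, List.getElem?_eq_getElem hk]
  constructor
  · rintro (h | h)
    · exact Or.inl h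
    · right
      simp only [Option.toList_some, List.mem_singleton] at h
      rw [h]; rfl
  · rintro (h | h)
    · exact Or.inl h
    · right
      simp only [Option.toList_some, List.mem_singleton]
      rw [h]; rfl

include hG hIG hL1 hreg in
lemma Jk_step {k : ℕ} (hk : k < L.length) (n : ℕ) :
    finrank K (gradedPiece K (Jk I L (k + 1)) (n + 1))
        + finrank K (gradedPiece K (Jk I L k) n)
      = finrank K (gradedPiece K (Jk I L k) (n + 1)) := by
  rw [Jk_succ hk]
  exact gp_step (fun p hp m => Jk_hom hG hIG hL1 k hp m)
    (hL1 _ (List.get_mem L ⟨k, hk⟩)) (fun f hf => hreg.1 k hk f hf) n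

include hreg in
lemma Jk_zero_rank (k : ℕ) : finrank K (gradedPiece K (Jk I L k) 0) = 1 :=
  gp_zero_finrank (Jk_ne_top hreg k)

include hG hIG hL1 hreg in
lemma Jk_coeff : ∀ k, k ≤ L.length → ∀ n : ℕ,
    (PowerSeries.coeff n) (hilbertSeries K I * (1 - PowerSeries.X) ^ k)
      = (finrank K (gradedPiece K (Jk I L k) n) : ℤ) := by
  intro k
  induction k with
  | zero =>
      intro _ n
      rw [pow_zero, mul_one, Jk_zero, hilbertSeries, PowerSeries.coeff_mk]
  | succ k ih =>
      intro hk1 n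
      have hk : k < L.length := by omega
      have ihm := ih (by omega)
      have hmul : hilbertSeries K I * (1 - PowerSeries.X) ^ (k + 1)
          = hilbertSeries K I * (1 - PowerSeries.X) ^ k * (1 - PowerSeries.X) := by
        ring
      rw [hmul, mul_sub, mul_one, map_sub]
      cases n with
      | zero =>
          rw [PowerSeries.coeff_zero_mul_X, sub_zero, ihm 0,
            Jk_zero_rank hreg k, Jk_zero_rank hreg (k + 1)]
      | succ n =>
          rw [PowerSeries.coeff_succ_mul_X, ihm (n + 1), ihm n]
          have := Jk_step hG hIG hL1 hreg hk n
          push_cast [← this]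
          ring

include hG hIG hL1 hreg in
lemma Jk_one : ∀ k, k ≤ L.length →
    finrank K (gradedPiece K (Jk I L k) 1) + k = finrank K (gradedPiece K I 1) := by
  intro k
  induction k with
  | zero => intro _; rw [Jk_zero]; omega
  | succ k ih =>
      intro hk1
      have hk : k < L.length := by omega
      have h1 := Jk_step hG hIG hL1 hreg hk 0
      simp only [Nat.reduceAdd, Nat.zero_add, zero_add] at h1
      rw [Jk_zero_rank hreg k] at h1
      have := ih (by omega)
      omega

include hG hIG hL1 hreg in
lemma Jk_two : ∀ k, k ≤ L.length →
    finrank K (gradedPiece K (Jk I L k) 2)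
        + (∑ i ∈ Finset.range k, finrank K (gradedPiece K (Jk I L i) 1))
      = finrank K (gradedPiece K I 2) := by
  intro k
  induction k with
  | zero => intro _; rw [Jk_zero]; simp
  | succ k ih =>
      intro hk1
      have hk : k < L.length := by omega
      have h1 := Jk_step hG hIG hL1 hreg hk 1
      simp only [Nat.reduceAdd, Nat.zero_add, zero_add] at h1
      have := ih (by omega)
      rw [Finset.sum_range_succ]
      omega

end Stage

lemma mul_succ_of_eq {m n : ℕ} (h : m + 1 = n) : n * (n + 1) = (m + 1) * (m + 2) := by
  subst h; ring

lemma sum_lem (k : ℕ) :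
    2 * (∑ i ∈ Finset.range k, (k + 1 - i)) + 2 = (k + 1) * (k + 2) := by
  induction k with
  | zero => simp
  | succ k ih =>
      have hsplit : (∑ i ∈ Finset.range (k + 1), (k + 2 - i))
          = (∑ i ∈ Finset.range k, (k + 1 - i)) + k + 2 := by
        rw [Finset.sum_range_succ]
        have : ∀ i ∈ Finset.range k, k + 2 - i = (k + 1 - i) + 1 := by
          intro i hi
          have := Finset.mem_range.1 hi
          omega
        rw [Finset.sum_congr rfl this, Finset.sum_add_distrib, Finset.sum_const,
          Finset.card_range, smul_eq_mul]
        omega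
      rw [hsplit]
      have : 2 * ((∑ i ∈ Finset.range k, (k + 1 - i)) + k + 2) + 2
          = (2 * (∑ i ∈ Finset.range k, (k + 1 - i)) + 2) + 2 * k + 4 := by ring
      rw [this, ih]
      ring


set_option maxHeartbeats 1000000 in
/-- Let `K` be an infinite field and `I ⊆ S = K[x_1,…,x_N]` a non-principal graded
ideal generated in degree `2` with `S/I` Gorenstein: the linear forms `L` form a
regular sequence on `S/I` with Artinian reduction `A = S/(I + (L))`, and the socle of
`A` is one-dimensional.  Then `I` is extremal Gorenstein — equivalently
`reg S/I = 2`, i.e. the Artinian reduction is nonzero in degree `2` and vanishes in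
degrees `≥ 3` — if and only if the `h`-vector of `S/I` (the coefficient vector
`hpoly` of the numerator of the Hilbert series) has the form `(1, q, 1, 0, …, 0)`
with `q > 1`. -/
theorem stmt_17 (K : Type*) [Field K] [Infinite K] {N : ℕ}
    (I : Ideal (MvPolynomial (Fin N) K))
    (G : Set (MvPolynomial (Fin N) K)) (hG : ∀ g ∈ G, g.IsHomogeneous 2)
    (hIG : I = Ideal.span G)
    (hnotprin : ¬ ∃ f : MvPolynomial (Fin N) K, I = Ideal.span {f})
    (L : List (MvPolynomial (Fin N) K)) (hL1 : ∀ f ∈ L, f.IsHomogeneous 1)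
    (hreg : IsRegularSeq K I L)
    (A : Ideal (MvPolynomial (Fin N) K)) (hA : A = I ⊔ Ideal.span {g | g ∈ L})
    (hart : FiniteDimensional K (MvPolynomial (Fin N) K ⧸ A))
    (hgor : ∃ a : MvPolynomial (Fin N) K ⧸ A, a ≠ 0 ∧
      (∀ i : Fin N, Ideal.Quotient.mk A (MvPolynomial.X i) * a = 0) ∧
      ∀ b : MvPolynomial (Fin N) K ⧸ A,
        (∀ i : Fin N, Ideal.Quotient.mk A (MvPolynomial.X i) * b = 0) → ∃ c : K, b = c • a)
    (hpoly : Polynomial ℤ)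
    (hser : hilbertSeries K I * (1 - PowerSeries.X) ^ L.length =
      (hpoly : PowerSeries ℤ)) :
    (gradedPiece K A 2 ≠ ⊥ ∧ ∀ n : ℕ, 3 ≤ n → gradedPiece K A n = ⊥) ↔
      (hpoly.coeff 0 = 1 ∧ 1 < hpoly.coeff 1 ∧ hpoly.coeff 2 = 1 ∧
        ∀ i : ℕ, 3 ≤ i → hpoly.coeff i = 0) := by
  have hAJk : A = Jk I L L.length := by
    rw [hA, Jk, List.take_length]
  have hAneTop : A ≠ ⊤ := by rw [hA]; exact hreg.2
  have hcoeff : ∀ n : ℕ, hpoly.coeff n = (finrank K (gradedPiece K A n) : ℤ) := by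
    intro n
    have h := Jk_coeff hG hIG hL1 hreg L.length le_rfl n
    rw [hser] at h
    rw [← hAJk] at h
    rw [← h, Polynomial.coeff_coe]
  constructor
  · rintro ⟨h2, h3⟩
    -- dimension in degree 2 is 1
    have hd2 : finrank K (gradedPiece K A 2) = 1 := by
      obtain ⟨a, ha0, _, hsoc⟩ := hgor
      have hle : gradedPiece K A 2 ≤ Submodule.span K {a} := by
        intro v hv
        obtain ⟨p, hp, rfl⟩ := mem_gradedPiece.1 hv
        have hann : ∀ i : Fin N,
            Ideal.Quotient.mk A (X i) * Ideal.Quotient.mk A p = 0 := by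
          intro i
          rw [← map_mul]
          have hmem : (X i * p) ∈ homogeneousSubmodule (Fin N) K 3 := by
            have h12 : (1 : ℕ) + 2 = 3 := rfl
            exact h12 ▸ ((isHomogeneous_X K i).mul hp)
          have hm : Ideal.Quotient.mk A (X i * p) ∈ gradedPiece K A 3 :=
            mem_gradedPiece.2 ⟨_, hmem, rfl⟩
          rw [h3 3 le_rfl, Submodule.mem_bot] at hm
          exact hm
        obtain ⟨c, hc⟩ := hsoc _ hann
        rw [hc]
        exact Submodule.smul_mem _ _ (Submodule.mem_span_singleton_self a)
      have hub : finrank K (gradedPiece K A 2) ≤ 1 := by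
        haveI : FiniteDimensional K (Submodule.span K {a}) :=
          FiniteDimensional.span_of_finite K (Set.finite_singleton a)
        calc finrank K (gradedPiece K A 2) ≤ finrank K (Submodule.span K {a}) :=
              Submodule.finrank_mono hle
          _ = 1 := finrank_span_singleton ha0
      have hne0 : finrank K (gradedPiece K A 2) ≠ 0 := by
        intro h0
        exact h2 (Submodule.finrank_eq_zero.1 h0)
      omega
    -- dimension in degree 1 is at least 2
    have hd1 : 2 ≤ finrank K (gradedPiece K A 1) := by
      by_contra hlt
      push_neg at hlt
      interval_cases hd1v : finrank K (gradedPiece K A 1)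
      · -- degree-1 part vanishes: then degree-2 part vanishes, contradiction
        have hbot1 : gradedPiece K A 1 = ⊥ := Submodule.finrank_eq_zero.1 hd1v
        have hXA : ∀ i : Fin N, (X i : MvPolynomial (Fin N) K) ∈ A := by
          intro i
          have hm : Ideal.Quotient.mk A (X i) ∈ gradedPiece K A 1 :=
            mem_gradedPiece.2 ⟨X i, isHomogeneous_X K i, rfl⟩
          rw [hbot1, Submodule.mem_bot] at hm
          exact Ideal.Quotient.eq_zero_iff_mem.1 hm
        have hbot2 : gradedPiece K A 2 = ⊥ := by
          rw [eq_bot_iff]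
          rintro v hv
          obtain ⟨p, hp, rfl⟩ := mem_gradedPiece.1 hv
          rw [Submodule.mem_bot]
          rw [Ideal.Quotient.eq_zero_iff_mem]
          nth_rewrite 1 [p.as_sum]
          refine Submodule.sum_mem _ fun d hd => ?_
          have hdeg : d.degree = 2 := by
            rw [Finsupp.degree_eq_weight_one]
            exact hp (MvPolynomial.mem_support_iff.1 hd)
          obtain ⟨i, j, rfl⟩ := deg_two_eq_pair hdeg
          have : (monomial (Finsupp.single i 1 + Finsupp.single j 1)
              (coeff (Finsupp.single i 1 + Finsupp.single j 1) p)
                : MvPolynomial (Fin N) K)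
              = X i * monomial (Finsupp.single j 1)
                  (coeff (Finsupp.single i 1 + Finsupp.single j 1) p) := by
            rw [X, monomial_mul, one_mul]
          rw [this]
          exact Ideal.mul_mem_right _ A (hXA i)
        exact h2 hbot2
      · -- one-dimensional degree-1 part: I must be zero, contradicting non-principality
        exfalso
        have hIneTop : I ≠ ⊤ := by
          have := Jk_ne_top (I := I) (L := L) hreg 0
          rwa [Jk_zero] at this
        have hf1 : finrank K (gradedPiece K I 1) = N := by
          have h := finrank_gp_add I 1
          have hbot : (homogeneousSubmodule (Fin N) K 1
              ⊓ Submodule.restrictScalars K I) = ⊥ := by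
            rw [eq_bot_iff]
            rintro p ⟨hp1, hpI⟩
            have hpI' : p ∈ Ideal.span G := by rw [← hIG]; exact hpI
            have hc := (span_low_comp hG hpI').2
            have hcp : homogeneousComponent 1 p = p := by
              rw [homogeneousComponent_of_mem hp1, if_pos rfl]
            rw [Submodule.mem_bot, ← hcp, hc]
          rw [hbot, finrank_bot, add_zero, finrank_HS_one] at h
          exact h
        have hlen : L.length + 1 = N := by
          have h := Jk_one hG hIG hL1 hreg L.length le_rfl
          rw [← hAJk, hd1v, hf1] at h
          omega
        have hranks : ∀ i : ℕ, i ≤ L.length →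
            finrank K (gradedPiece K (Jk I L i) 1) = N - i := by
          intro i hi
          have h := Jk_one hG hIG hL1 hreg i hi
          rw [hf1] at h
          omega
        have hf2 : 2 * finrank K (gradedPiece K I 2) = N * (N + 1) := by
          have h := Jk_two hG hIG hL1 hreg L.length le_rfl
          rw [← hAJk, hd2] at h
          have hsum : (∑ i ∈ Finset.range L.length,
              finrank K (gradedPiece K (Jk I L i) 1))
              = ∑ i ∈ Finset.range L.length, (L.length + 1 - i) := by
            refine Finset.sum_congr rfl fun i hi => ?_
            have hi' := Finset.mem_range.1 hi
            rw [hranks i (by omega)]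
            omega
          rw [hsum] at h
          have hsl := sum_lem L.length
          have hNlen : N * (N + 1) = (L.length + 1) * (L.length + 2) :=
            mul_succ_of_eq hlen
          omega
        have hHS2 : 2 * finrank K (homogeneousSubmodule (Fin N) K 2) ≤ N * (N + 1) := by
          have h := finrank_HS_two_le (K := K) (N := N)
          have hch : (N + 1).choose 2 = (N + 1) * N / 2 := by
            rw [Nat.choose_two_right]
            simp
          have h2' : 2 * ((N + 1) * N / 2) = (N + 1) * N := by
            rcases Nat.even_mul_succ_self N with ⟨c, hc⟩
            have hcomm : (N + 1) * N = N * (N + 1) := by ring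
            omega
          calc 2 * finrank K (homogeneousSubmodule (Fin N) K 2)
              ≤ 2 * ((N + 1).choose 2) := by omega
            _ = (N + 1) * N := by rw [hch, h2']
            _ = N * (N + 1) := by ring
        have hI2bot : (homogeneousSubmodule (Fin N) K 2
            ⊓ Submodule.restrictScalars K I) = ⊥ := by
          have h := finrank_gp_add I 2
          haveI : FiniteDimensional K (homogeneousSubmodule (Fin N) K 2
              ⊓ Submodule.restrictScalars K I : Submodule K (MvPolynomial (Fin N) K)) :=
            Submodule.finiteDimensional_of_le inf_le_left
          have hz : finrank K (homogeneousSubmodule (Fin N) K 2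
              ⊓ Submodule.restrictScalars K I :
                Submodule K (MvPolynomial (Fin N) K)) = 0 := by omega
          exact Submodule.finrank_eq_zero.1 hz
        apply hnotprin
        refine ⟨0, ?_⟩
        rw [hIG]
        have hG0 : ∀ g ∈ G, g = (0 : MvPolynomial (Fin N) K) := by
          intro g hg
          have hmem : g ∈ (homogeneousSubmodule (Fin N) K 2
              ⊓ Submodule.restrictScalars K I : Submodule K (MvPolynomial (Fin N) K)) :=
            ⟨hG g hg, show g ∈ I by rw [hIG]; exact Ideal.subset_span hg⟩
          rw [hI2bot, Submodule.mem_bot] at hmem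
          exact hmem
        apply le_antisymm
        · rw [Ideal.span_le]
          intro g hg
          rw [hG0 g hg]
          exact Ideal.subset_span rfl
        · rw [Ideal.span_le]
          rintro g rfl
          exact (Ideal.span G).zero_mem
    refine ⟨?_, ?_, ?_, ?_⟩
    · rw [hcoeff 0]
      have h0 : finrank K (gradedPiece K A 0) = 1 := gp_zero_finrank hAneTop
      rw [h0]; norm_num
    · rw [hcoeff 1]
      exact_mod_cast hd1
    · rw [hcoeff 2, hd2]; norm_num
    · intro i hi
      rw [hcoeff i]
      have : finrank K (gradedPiece K A i) = 0 := by
        rw [h3 i hi]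
        exact finrank_bot K _
      rw [this]; norm_num
  · rintro ⟨hc0, hc1, hc2, hc3⟩
    constructor
    · intro hbot
      have := hcoeff 2
      rw [hc2, hbot] at this
      rw [finrank_bot] at this
      norm_num at this
    · intro n hn
      have h := hcoeff n
      rw [hc3 n hn] at h
      have : finrank K (gradedPiece K A n) = 0 := by exact_mod_cast h.symm
      exact Submodule.finrank_eq_zero.1 this
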